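/- arXiv:1606.03897 — 2 statements merged into one kernel-verified Lean document; each statement's English description precedes it below -/
import Mathlib

section
/- In the right-justified transformed alignment, if S̃ʲ[q−1] is empty (a gap) for some string j and some position q in a ps-region block, then S̃ʲ[q'] for q' the largest non-gap position before q is the last character of the preceding cs-region, and the suffix (j,q) is prefixed by α̃⁺ of that block. -/
/-- `β` occurs in `S` at position `i`. -/
def occursAt {α : Type*} (S β : List α) (i : ℕ) : Prop :=
  i + β.length ≤ S.length ∧ β <+: S.drop i

/-- `p` is the last non-gap position before `q` in the transformed string. -/
def lastNonGap {α : Type*} (St : ℕ → Option α) (q p : ℕ) : Prop :=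
  p < q ∧ St p ≠ none ∧ ∀ r, p < r → r < q → St r = none

/-- The string formed by the non-gap characters of `St` at positions `≥ q`
(alignment length `n`): the suffix `(j,q)`. -/
def suffixStr {α : Type*} (St : ℕ → Option α) (n q : ℕ) : List α :=
  (List.Ico q n).filterMap St

/-- The non-gap characters of `St` lying in block `b`. -/
def blockContent {α : Type*} (blk : ℕ → ℕ) (St : ℕ → Option α) (n b : ℕ) :
    List α :=
  ((List.range n).filter (fun i => blk i = b)).filterMap St

private lemma blk_mono {blk : ℕ → ℕ}
    (hstep : ∀ i, blk (i + 1) = blk i ∨ blk (i + 1) = blk i + 1) :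
    Monotone blk :=
  monotone_nat_of_le_succ fun i => by rcases hstep i with h | h <;> omega

private lemma blk_ivt {blk : ℕ → ℕ}
    (hstep : ∀ i, blk (i + 1) = blk i ∨ blk (i + 1) = blk i + 1) :
    ∀ (d i v : ℕ), blk i ≤ v → v ≤ blk (i + d) →
      ∃ r, i ≤ r ∧ r ≤ i + d ∧ blk r = v := by
  intro d
  induction d with
  | zero => exact fun i v h1 h2 => ⟨i, le_refl i, le_refl i, le_antisymm h1 h2⟩
  | succ d ih =>
    intro i v h1 h2
    have h2' : v ≤ blk (i + d + 1) := h2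
    by_cases hv : v ≤ blk (i + d)
    · obtain ⟨r, hr1, hr2, hr3⟩ := ih i v h1 hv
      exact ⟨r, hr1, by omega, hr3⟩
    · have hs := hstep (i + d)
      exact ⟨i + d + 1, by omega, by omega, by omega⟩

private lemma blk_ivt' {blk : ℕ → ℕ}
    (hstep : ∀ i, blk (i + 1) = blk i ∨ blk (i + 1) = blk i + 1) :
    ∀ (i i' v : ℕ), i ≤ i' → blk i ≤ v → v ≤ blk i' →
      ∃ r, i ≤ r ∧ r ≤ i' ∧ blk r = v := by
  intro i i' v h h1 h2
  obtain ⟨r, a, b, c⟩ := blk_ivt hstep (i' - i) i v h1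
    (by rw [Nat.add_sub_cancel' h]; exact h2)
  exact ⟨r, a, by omega, c⟩

/-- In the right-justified transformed alignment (blocks alternate: even block
indices are cs-regions, odd are ps-regions; in a ps-region each string is
`α̃⁺ ++ Δʲ` pushed to the right, where `α̃⁺` of the block is nonempty and
occurs exactly once in each string): if `S̃ʲ[q-1]` is a gap for some position
`q` in a ps-region block, then the largest non-gap position `q'` before `q` is
the last position of the preceding cs-region, and the suffix `(j,q)` is
prefixed by the `α̃⁺` of that block. -/
theorem stmt16 {α : Type*} (m n : ℕ) (Stilde : Fin m → ℕ → Option α)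
    (blk : ℕ → ℕ) (aplus : ℕ → List α)
    (hblk0 : blk 0 = 0)
    (hstep : ∀ i, blk (i + 1) = blk i ∨ blk (i + 1) = blk i + 1)
    (hcs : ∀ (j : Fin m) i, i < n → Even (blk i) → Stilde j i ≠ none)
    (hrj : ∀ (j : Fin m) i i', i < n → i' < n → blk i = blk i' →
        ¬ Even (blk i) → i ≤ i' → Stilde j i ≠ none → Stilde j i' ≠ none)
    (haplus_ne : ∀ b, ¬ Even b → aplus b ≠ [])
    (hcontent : ∀ (j : Fin m) b, ¬ Even b →
        ∃ δ : List α, blockContent blk (Stilde j) n b = aplus b ++ δ)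
    (honce : ∀ (j : Fin m) b, ¬ Even b →
        ∃! i, occursAt (suffixStr (Stilde j) n 0) (aplus b) i) :
    ∀ (j : Fin m) (q q' : ℕ), 0 < q → q < n → ¬ Even (blk q) →
      Stilde j (q - 1) = none →
      lastNonGap (Stilde j) q q' →
      (Even (blk q') ∧ blk q = blk q' + 1) ∧
      aplus (blk q) <+: suffixStr (Stilde j) n q := by
  intro j q q' hq0 hqn hodd hgap hlng
  obtain ⟨hq'q, hq'ne, hbetween⟩ := hlng
  have hmono := blk_mono hstep
  have hoddq : blk q % 2 = 1 := Nat.not_even_iff.mp hodd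
  have hq1 : q - 1 + 1 = q := Nat.succ_pred_eq_of_pos hq0
  -- Step A : blk (q-1) = blk q
  have hA : blk (q - 1) = blk q := by
    rcases hstep (q - 1) with h | h
    · rw [hq1] at h; exact h.symm
    · exfalso
      rw [hq1] at h
      exact hcs j (q - 1) (by omega)
        (Nat.even_iff.mpr (by omega)) hgap
  -- every strictly intermediate position has odd block
  have hgaps : ∀ r, q' < r → r < q → blk r % 2 = 1 := by
    intro r h1 h2
    by_contra h
    exact hcs j r (by omega) (Nat.even_iff.mpr (by omega)) (hbetween r h1 h2)
  -- blk q' < blk q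
  have hq'lt : blk q' < blk q := by
    rcases lt_or_eq_of_le (hmono (le_of_lt hq'q)) with h | h
    · exact h
    · exfalso
      exact hrj j q' (q - 1) (by omega) (by omega) (by omega)
        (by rw [h]; exact hodd) (by omega) hq'ne hgap
  -- blk q' is even
  have heven : blk q' % 2 = 0 := by
    by_contra h
    obtain ⟨r, hr1, hr2, hr3⟩ := blk_ivt' hstep q' q (blk q' + 1)
      (le_of_lt hq'q) (by omega) (by omega)
    have hrq' : q' < r := by
      rcases lt_or_eq_of_le hr1 with h' | h'
      · exact h'
      · exfalso; rw [← h'] at hr3; omega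
    have hrq : r < q := by
      rcases lt_or_eq_of_le hr2 with h' | h'
      · exact h'
      · exfalso; rw [h'] at hr3; omega
    have := hgaps r hrq' hrq
    omega
  -- blk q = blk q' + 1
  have hsucc : blk q = blk q' + 1 := by
    by_contra h
    obtain ⟨r, hr1, hr2, hr3⟩ := blk_ivt' hstep q' q (blk q' + 2)
      (le_of_lt hq'q) (by omega) (by omega)
    have hrq' : q' < r := by
      rcases lt_or_eq_of_le hr1 with h' | h'
      · exact h'
      · exfalso; rw [← h'] at hr3; omega
    have hrq : r < q := by
      rcases lt_or_eq_of_le hr2 with h' | h'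
      · exact h'
      · exfalso; rw [h'] at hr3; omega
    have := hgaps r hrq' hrq
    omega
  refine ⟨⟨Nat.even_iff.mpr heven, hsucc⟩, ?_⟩
  -- Part 2
  have hC : ∀ i, i < q → blk i = blk q → Stilde j i = none := by
    intro i hi hib
    have hq'i : q' < i := by
      by_contra h
      have := hmono (show i ≤ q' by omega)
      omega
    exact hbetween i hq'i hi
  have hex : ∃ d, blk (q + d) ≠ blk q ∨ q + d = n := ⟨n - q, Or.inr (by omega)⟩
  set t := q + Nat.find hex with ht
  have ht_le : t ≤ n := by
    have := Nat.find_min' hex (m := n - q) (Or.inr (by omega))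
    omega
  have hqt : q ≤ t := by omega
  have h_in : ∀ i, q ≤ i → i < t → blk i = blk q := by
    intro i h1 h2
    have hm := Nat.find_min hex (m := i - q) (by omega)
    push_neg at hm
    have := hm.1
    rwa [show q + (i - q) = i from by omega] at this
  have h_out : ∀ i, t ≤ i → i < n → blk i ≠ blk q := by
    intro i h1 h2
    have hp := Nat.find_spec hex
    rw [← ht] at hp
    have hbt : blk t ≠ blk q := by
      rcases hp with h | h
      · exact h
      · omega
    have h3 : blk q ≤ blk t := hmono hqt
    have h4 : blk t ≤ blk i := hmono h1
    omega
  have hsplit : List.Ico q n = List.Ico q t ++ List.Ico t n :=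
    (List.Ico.append_consecutive hqt ht_le).symm
  have key1 : (List.Ico q n).filter (fun i => blk i = blk q) = List.Ico q t := by
    rw [hsplit, List.filter_append]
    rw [List.filter_eq_self.mpr (by
      intro a ha
      rw [List.Ico.mem] at ha
      simp [h_in a ha.1 ha.2])]
    rw [List.filter_eq_nil_iff.mpr (by
      intro a ha
      rw [List.Ico.mem] at ha
      simp [h_out a ha.1 ha.2])]
    simp
  have hbc : blockContent blk (Stilde j) n (blk q)
      = (List.Ico q t).filterMap (Stilde j) := by
    unfold blockContent
    rw [← List.Ico.zero_bot,
      ← List.Ico.append_consecutive (Nat.zero_le q) (le_of_lt hqn),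
      List.filter_append, List.filterMap_append, key1]
    rw [List.filterMap_eq_nil_iff.mpr (by
      intro a ha
      rw [List.mem_filter, List.Ico.mem] at ha
      have hb : blk a = blk q := by simpa using ha.2
      exact hC a ha.1.2 hb)]
    simp
  obtain ⟨δ, hδ⟩ := hcontent j (blk q) hodd
  have hsuf : suffixStr (Stilde j) n q
      = (aplus (blk q) ++ δ) ++ (List.Ico t n).filterMap (Stilde j) := by
    unfold suffixStr
    rw [hsplit, List.filterMap_append, ← hbc, hδ]
  exact ⟨δ ++ (List.Ico t n).filterMap (Stilde j),
    by rw [hsuf, List.append_assoc]⟩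
end

section
/- If a pattern occurrence range in the SAA has size greater than one (First_ℓ < Last_ℓ), then every suffix contained in every entry of SAA[First_ℓ..Last_ℓ] is prefixed by P[ℓ..p]; only when the range has size exactly one can an entry contain suffixes not prefixed by P[ℓ..p]. -/
theorem between_prefix {α : Type*} [LinearOrder α] :
    ∀ (Q u v w : List α), Q <+: u → Q <+: v → u ≤ w → w ≤ v → Q <+: w := by
  intro Q
  induction Q with
  | nil => intro u v w _ _ _ _; exact List.nil_prefix
  | cons q Q ih =>
    intro u v w hu hv huw hwv
    obtain ⟨u₁, rfl⟩ := hu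
    obtain ⟨v₁, rfl⟩ := hv
    match w with
    | [] =>
      exact absurd (le_antisymm huw (le_of_not_gt fun h => by cases (h : List.Lex (· < ·) _ []))) (by simp)
    | a :: w₁ =>
      rcases lt_or_eq_of_le huw with h1 | h1
      · rcases lt_or_eq_of_le hwv with h2 | h2
        · have h1' : List.Lex (· < ·) (q :: (Q ++ u₁)) (a :: w₁) := h1
          have h2' : List.Lex (· < ·) (a :: w₁) (q :: (Q ++ v₁)) := h2
          cases h1' with
          | cons h1t =>
            cases h2' with
            | cons h2t =>
              exact List.cons_prefix_cons.2 ⟨rfl, ih _ _ w₁ ⟨u₁, rfl⟩ ⟨v₁, rfl⟩ (le_of_lt h1t) (le_of_lt h2t)⟩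
            | rel h2h => exact absurd h2h (lt_irrefl _)
          | rel h1h =>
            cases h2' with
            | cons h2t => exact absurd h1h (lt_irrefl _)
            | rel h2h => exact absurd (h1h.trans h2h) (lt_irrefl _)
        · rw [h2]; exact ⟨v₁, rfl⟩
      · rw [← h1]; exact ⟨u₁, rfl⟩


/-- `SAA` models the sorted array of a-suffixes (`SAA k` = set of suffix
strings of entry `k`, entries sorted lexicographically); `Q` stands for
`P[ℓ..p]` and `(First, Last)` is the maximal range of entries containing some
suffix prefixed by `Q`.  Key fact from the a-suffix grouping (hypothesis
`hkey`): if suffixes in two distinct entries are both prefixed by `Q`, then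
all suffixes in both entries are prefixed by `Q`.

Claim: if the range has size greater than one (`First < Last`), then every
suffix contained in every entry of `SAA[First..Last]` is prefixed by `Q`. -/
theorem stmt19 {α : Type*} [LinearOrder α]
    (SAA : ℕ → Set (List α)) (Q : List α) (First Last : ℕ)
    (hsorted : ∀ k k' : ℕ, k < k' → ∀ u ∈ SAA k, ∀ v ∈ SAA k', u ≤ v)
    (hkey : ∀ k k' : ℕ, k ≠ k' → ∀ u ∈ SAA k, ∀ u' ∈ SAA k',
        Q <+: u → Q <+: u' → ∀ v ∈ SAA k, Q <+: v)
    (hFirst : ∃ u ∈ SAA First, Q <+: u)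
    (hLast : ∃ u ∈ SAA Last, Q <+: u)
    (hmax : ∀ k, (∃ u ∈ SAA k, Q <+: u) → First ≤ k ∧ k ≤ Last) :
    First < Last →
      ∀ k, First ≤ k → k ≤ Last → ∀ u ∈ SAA k, Q <+: u := by
  intro hlt k hk1 hk2 u hu
  obtain ⟨u0, hu0, hpu0⟩ := hFirst
  obtain ⟨v0, hv0, hpv0⟩ := hLast
  rcases eq_or_lt_of_le hk1 with h1 | h1
  · exact hkey First Last hlt.ne u0 hu0 v0 hv0 hpu0 hpv0 u (h1 ▸ hu)
  rcases eq_or_lt_of_le hk2 with h2 | h2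
  · exact hkey Last First hlt.ne' v0 hv0 u0 hu0 hpv0 hpu0 u (h2 ▸ hu)
  exact between_prefix Q u0 v0 u hpu0 hpv0 (hsorted First k h1 u0 hu0 u hu)
    (hsorted k Last h2 u hu v0 hv0)
end
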